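/- arXiv:2410.14714 — 6 statements merged into one kernel-verified Lean document; each statement's English description precedes it below -/
import Mathlib

section
/- Let φ : T → T be a Lipschitz self-map of the rooted tree T such that |φ(v)| → ∞ as |v| → ∞. Then for every f ∈ Lip_0(T), the composition f ∘ φ belongs to Lip_0(T). -/
/-- An infinite, locally finite rooted tree in which every vertex other than
the root has degree greater than 1, together with the parent map. -/
structure LipTree (V : Type*) where
  root : V
  G : SimpleGraph V
  isTree : G.IsTree
  locFin : ∀ v : V, (G.neighborSet v).Finite
  infinite : Infinite V
  deg_gt : ∀ v : V, v ≠ root → 1 < (G.neighborSet v).ncard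
  par : V → V
  par_root : par root = root
  adj_par : ∀ v : V, v ≠ root → G.Adj v (par v)
  dist_par : ∀ v : V, v ≠ root → G.dist (par v) root + 1 = G.dist v root

namespace LipTree

variable {V : Type*}

/-- `|v|`, the distance from `v` to the root. -/
noncomputable def depth (T : LipTree V) (v : V) : ℕ := T.G.dist v T.root

/-- membership in the Lipschitz space `Lip(T)`. -/
def MemLip (T : LipTree V) (f : V → ℂ) : Prop :=
  ∃ C : ℝ, ∀ v : V, v ≠ T.root → ‖f v - f (T.par v)‖ ≤ C

/-- membership in the little Lipschitz space `Lip₀(T)`. -/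
def MemLip0 (T : LipTree V) (f : V → ℂ) : Prop :=
  T.MemLip f ∧ ∀ ε : ℝ, 0 < ε → ∃ N : ℕ, ∀ v : V, v ≠ T.root → N ≤ T.depth v →
    ‖f v - f (T.par v)‖ < ε

/-- the norm `‖f‖_Lip = max {|f(root)|, sup_{v ≠ root} |f(v) - f(v⁻)|}`. -/
noncomputable def normLip (T : LipTree V) (f : V → ℂ) : ℝ :=
  max (‖f T.root‖)
    (sSup {r : ℝ | ∃ v : V, v ≠ T.root ∧ r = ‖f v - f (T.par v)‖})

/-- `φ` is a Lipschitz self-map of the tree. -/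
noncomputable def LipschitzSelfMap (T : LipTree V) (φ : V → V) : Prop :=
  ∃ C : ℕ, ∀ v : V, v ≠ T.root → T.G.dist (φ v) (φ (T.par v)) ≤ C

/-- the Lipschitz number `λ_φ`. -/
noncomputable def lipNum (T : LipTree V) (φ : V → V) : ℝ :=
  sSup {r : ℝ | ∃ v : V, v ≠ T.root ∧ r = (T.G.dist (φ v) (φ (T.par v)) : ℝ)}

/-- the composition operator `C_φ` maps `Lip₀` into itself and is bounded there. -/
def BoundedOnLip0 (T : LipTree V) (φ : V → V) : Prop :=
  (∀ f : V → ℂ, T.MemLip0 f → T.MemLip0 (f ∘ φ)) ∧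
  ∃ C : ℝ, ∀ f : V → ℂ, T.MemLip0 f → T.normLip (f ∘ φ) ≤ C * T.normLip f

/-- `u` belongs to the sector `S_v` determined by `v`. -/
def InSector (T : LipTree V) (v u : V) : Prop := ∃ k : ℕ, T.par^[k] u = v

section Aux

variable {V : Type*} (T : LipTree V)


lemma conn : T.G.Connected := T.isTree.isConnected

lemma depth_root : T.depth T.root = 0 := SimpleGraph.dist_self

lemma root_of_depth_eq_zero {v : V} (h : T.depth v = 0) : v = T.root :=
  (T.conn.dist_eq_zero_iff).mp h

lemma depth_par_add_one {v : V} (h : v ≠ T.root) :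
    T.depth (T.par v) + 1 = T.depth v := T.dist_par v h

lemma depth_le_iterate (v : V) : ∀ k : ℕ, T.depth v ≤ T.depth (T.par^[k] v) + k := by
  intro k
  induction k with
  | zero => simp
  | succ k ih =>
    by_cases h : T.par^[k] v = T.root
    · rw [Function.iterate_succ_apply', h, T.par_root]
      rw [h] at ih
      omega
    · have h2 := T.depth_par_add_one h
      rw [Function.iterate_succ_apply']
      omega

lemma support_dist {a y : V} (p : T.G.Walk a T.root) (hp : p.length = T.depth a)
    (hy : y ∈ p.support) : T.G.dist a y + T.depth y ≤ T.depth a := by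
  classical
  have h1 := SimpleGraph.dist_le (p.takeUntil y hy)
  have h2 := SimpleGraph.dist_le (p.dropUntil y hy)
  have h3 := congrArg SimpleGraph.Walk.length (p.take_spec hy)
  rw [SimpleGraph.Walk.length_append] at h3
  unfold LipTree.depth at *
  omega

lemma par_eq_of_adj {u x : V} (h : T.G.Adj u x) (hd : T.depth x ≤ T.depth u) :
    T.par u = x := by
  have hur : u ≠ T.root := by
    intro hu
    rw [hu, T.depth_root, Nat.le_zero] at hd
    exact h.ne' (T.root_of_depth_eq_zero hd ▸ hu ▸ rfl)
  have hdu : T.depth u ≠ 0 := fun h0 => hur (T.root_of_depth_eq_zero h0)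
  obtain ⟨q1, hq1path, hq1len⟩ := T.conn.exists_path_of_dist (T.par u) T.root
  obtain ⟨q2, hq2path, hq2len⟩ := T.conn.exists_path_of_dist x T.root
  have hu1 : u ∉ q1.support := by
    intro hmem
    have := T.support_dist q1 hq1len hmem
    have h4 := T.depth_par_add_one hur
    omega
  have hu2 : u ∉ q2.support := by
    intro hmem
    have h5 := T.support_dist q2 hq2len hmem
    have h6 : T.G.dist x u = 0 := by omega
    exact h.ne' (T.conn.dist_eq_zero_iff.mp h6)
  have hP1 : (SimpleGraph.Walk.cons (T.adj_par u hur) q1).IsPath := hq1path.cons hu1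
  have hP2 : (SimpleGraph.Walk.cons h q2).IsPath := hq2path.cons hu2
  obtain ⟨p, _, hU⟩ := T.isTree.existsUnique_path u T.root
  have h12 : SimpleGraph.Walk.cons (T.adj_par u hur) q1 = SimpleGraph.Walk.cons h q2 :=
    (hU _ hP1).trans (hU _ hP2).symm
  have := congrArg (fun w : T.G.Walk u T.root => w.getVert 1) h12
  simpa [SimpleGraph.Walk.getVert_cons] using this

lemma adj_dichotomy {u x : V} (h : T.G.Adj u x) : T.par u = x ∨ T.par x = u := by
  rcases le_total (T.depth x) (T.depth u) with hle | hle
  · exact Or.inl (T.par_eq_of_adj h hle)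
  · exact Or.inr (T.par_eq_of_adj h.symm hle)

lemma ancestor_meet : ∀ d : ℕ, ∀ u w : V, T.G.dist u w = d →
    ∃ i j : ℕ, i + j ≤ d ∧ T.par^[i] u = T.par^[j] w := by
  intro d
  induction d using Nat.strong_induction_on with
  | _ d ih =>
    intro u w hd
    rcases Nat.eq_zero_or_pos d with h0 | hpos
    · subst h0
      have : u = w := T.conn.dist_eq_zero_iff.mp hd
      exact ⟨0, 0, by simp [this]⟩
    · obtain ⟨p, hp⟩ := T.conn.exists_walk_length_eq_dist u w
      rw [hd] at hp
      cases p with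
      | nil => simp at hp; omega
      | @cons _ x _ hadj q =>
        simp only [SimpleGraph.Walk.length_cons] at hp
        have hq : T.G.dist x w ≤ d - 1 := by
          have := SimpleGraph.dist_le q
          omega
        obtain ⟨i, j, hij, heq⟩ := ih (T.G.dist x w) (by omega) x w rfl
        rcases T.adj_dichotomy hadj with hpar | hpar
        · refine ⟨i + 1, j, by omega, ?_⟩
          rw [Function.iterate_succ_apply, hpar, heq]
        · cases i with
          | zero =>
            refine ⟨0, j + 1, by omega, ?_⟩
            simp only [Function.iterate_zero_apply] at heq ⊢
            rw [Function.iterate_succ_apply', ← heq, hpar]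
          | succ i' =>
            refine ⟨i', j, by omega, ?_⟩
            rw [Function.iterate_succ_apply, hpar] at heq
            exact heq

lemma telescope (f : V → ℂ) (z : V) : ∀ i : ℕ, ∀ c : ℝ,
    (∀ k, k < i → ‖f (T.par^[k] z) - f (T.par^[k + 1] z)‖ ≤ c) →
    ‖f z - f (T.par^[i] z)‖ ≤ i * c := by
  intro i
  induction i with
  | zero => simp
  | succ i ih =>
    intro c hbd
    have h1 := ih c (fun k hk => hbd k (by omega))
    have h2 := hbd i (by omega)
    calc ‖f z - f (T.par^[i + 1] z)‖
        ≤ ‖f z - f (T.par^[i] z)‖ +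
          ‖f (T.par^[i] z) - f (T.par^[i + 1] z)‖ :=
          norm_sub_le_norm_sub_add_norm_sub _ _ _
      _ ≤ i * c + c := add_le_add h1 h2
      _ = (i + 1 : ℕ) * c := by push_cast; ring

end Aux

end LipTree

/-- If `φ` is Lipschitz and `|φ(v)| → ∞` as `|v| → ∞`, then `C_φ` maps `Lip₀` into itself. -/
theorem comp_maps_lip0 {V : Type*} (T : LipTree V) (φ : V → V)
    (hφ : T.LipschitzSelfMap φ)
    (hdiv : ∀ M : ℕ, ∃ N : ℕ, ∀ v : V, N ≤ T.depth v → M ≤ T.depth (φ v)) :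
    ∀ f : V → ℂ, T.MemLip0 f → T.MemLip0 (f ∘ φ) := by
  obtain ⟨C, hC⟩ := hφ
  intro f hf
  obtain ⟨⟨Cf, hCf⟩, hlit⟩ := hf
  set c : ℝ := max Cf 0 with hc
  have hc0 : 0 ≤ c := le_max_right _ _
  have hterm : ∀ y : V, ‖f y - f (T.par y)‖ ≤ c := by
    intro y
    by_cases hy : y = T.root
    · rw [hy, T.par_root]; simpa using hc0
    · exact le_trans (hCf y hy) (le_max_left _ _)
  constructor
  · refine ⟨C * c, ?_⟩
    intro v hv
    obtain ⟨i, j, hij, heq⟩ := T.ancestor_meet _ (φ v) (φ (T.par v)) rfl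
    have h1 : ‖f (φ v) - f (T.par^[i] (φ v))‖ ≤ i * c :=
      T.telescope f (φ v) i c (fun k _ => by
        rw [Function.iterate_succ_apply']; exact hterm _)
    have h2 : ‖f (φ (T.par v)) - f (T.par^[j] (φ (T.par v)))‖ ≤ j * c :=
      T.telescope f (φ (T.par v)) j c (fun k _ => by
        rw [Function.iterate_succ_apply']; exact hterm _)
    have hCd : i + j ≤ C := le_trans hij (hC v hv)
    calc ‖(f ∘ φ) v - (f ∘ φ) (T.par v)‖
        ≤ ‖f (φ v) - f (T.par^[i] (φ v))‖ +
          ‖f (T.par^[i] (φ v)) - f (φ (T.par v))‖ :=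
          norm_sub_le_norm_sub_add_norm_sub _ _ _
      _ = ‖f (φ v) - f (T.par^[i] (φ v))‖ +
          ‖f (φ (T.par v)) - f (T.par^[j] (φ (T.par v)))‖ := by
          rw [heq]; congr 1; exact norm_sub_rev _ _
      _ ≤ i * c + j * c := add_le_add h1 h2
      _ = ((i : ℝ) + j) * c := by ring
      _ ≤ C * c := by
          apply mul_le_mul_of_nonneg_right _ hc0
          exact_mod_cast hCd
  · intro ε hε
    have hC1 : (0 : ℝ) < (C : ℝ) + 1 := by positivity
    set ε' : ℝ := ε / ((C : ℝ) + 1) with hε'def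
    have hε' : 0 < ε' := by positivity
    obtain ⟨N', hN'⟩ := hlit ε' hε'
    obtain ⟨N, hN⟩ := hdiv (N' + C)
    refine ⟨N + 1, ?_⟩
    intro v hv hdepth
    have hdv : N ≤ T.depth v := by omega
    have hdpar := T.depth_par_add_one hv
    have hdpv : N ≤ T.depth (T.par v) := by omega
    have h1 := hN v hdv
    have h2 := hN _ hdpv
    obtain ⟨i, j, hij, heq⟩ := T.ancestor_meet _ (φ v) (φ (T.par v)) rfl
    have hdist : i + j ≤ C := le_trans hij (hC v hv)
    have key : ∀ z : V, N' + C ≤ T.depth z → ∀ k, k < C →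
        ‖f (T.par^[k] z) - f (T.par^[k + 1] z)‖ ≤ ε' := by
      intro z hz k hk
      have hit := T.depth_le_iterate z k
      have hdy : N' + 1 ≤ T.depth (T.par^[k] z) := by omega
      have hyr : T.par^[k] z ≠ T.root := by
        intro h0
        rw [h0, T.depth_root] at hdy
        omega
      have := hN' _ hyr (by omega)
      rw [Function.iterate_succ_apply']
      exact le_of_lt this
    have hb1 : ‖f (φ v) - f (T.par^[i] (φ v))‖ ≤ i * ε' :=
      T.telescope f (φ v) i ε' (fun k hk => key (φ v) h1 k (by omega))
    have hb2 : ‖f (φ (T.par v)) - f (T.par^[j] (φ (T.par v)))‖ ≤ j * ε' :=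
      T.telescope f (φ (T.par v)) j ε' (fun k hk => key _ h2 k (by omega))
    have hsum : ‖(f ∘ φ) v - (f ∘ φ) (T.par v)‖ ≤ ((i : ℝ) + j) * ε' := by
      calc ‖(f ∘ φ) v - (f ∘ φ) (T.par v)‖
          ≤ ‖f (φ v) - f (T.par^[i] (φ v))‖ +
            ‖f (T.par^[i] (φ v)) - f (φ (T.par v))‖ :=
            norm_sub_le_norm_sub_add_norm_sub _ _ _
        _ = ‖f (φ v) - f (T.par^[i] (φ v))‖ +
            ‖f (φ (T.par v)) - f (T.par^[j] (φ (T.par v)))‖ := by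
            rw [heq]; congr 1; exact norm_sub_rev _ _
        _ ≤ i * ε' + j * ε' := add_le_add hb1 hb2
        _ = ((i : ℝ) + j) * ε' := by ring
    have hfin : ((i : ℝ) + j) * ε' < ε := by
      have hle : ((i : ℝ) + j) ≤ (C : ℝ) := by exact_mod_cast hdist
      have h3 : ((i : ℝ) + j) * ε' ≤ (C : ℝ) * ε' :=
        mul_le_mul_of_nonneg_right hle (le_of_lt hε')
      have h4 : (C : ℝ) * ε' < ((C : ℝ) + 1) * ε' := by nlinarith
      have h5 : ((C : ℝ) + 1) * ε' = ε := by
        rw [hε'def]; field_simp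
      linarith
    exact lt_of_le_of_lt hsum hfin
end

section
/- Let φ : T → T be a Lipschitz self-map such that φ⁻¹({v}) is finite for every vertex v. Then the composition operator C_φ maps Lip_0(T) into itself. In particular this holds if φ is injective. -/
namespace LipTree

variable {V : Type*}

/-- In a tree, every path realizes the distance between its endpoints. -/
lemma path_length_eq {T : LipTree V} {a b : V} (p : T.G.Walk a b) (hp : p.IsPath) :
    p.length = T.G.dist a b := by
  classical
  obtain ⟨w, hw⟩ := T.isTree.isConnected.exists_walk_length_eq_dist a b
  have heq : p = w.bypass := (T.isTree.existsUnique_path a b).unique hp w.bypass_isPath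
  refine le_antisymm ?_ (SimpleGraph.dist_le p)
  rw [heq, ← hw]
  exact w.length_bypass_le

/-- If `u` lies on a walk from `a` to `b`, then `dist a u + dist u b ≤ length`. -/
lemma support_dist_s4 {T : LipTree V} {a b u : V} (p : T.G.Walk a b) (hu : u ∈ p.support) :
    T.G.dist a u + T.G.dist u b ≤ p.length := by
  classical
  have hlen : (p.takeUntil u hu).length + (p.dropUntil u hu).length = p.length := by
    rw [← SimpleGraph.Walk.length_append, p.take_spec hu]
  calc T.G.dist a u + T.G.dist u b
      ≤ (p.takeUntil u hu).length + (p.dropUntil u hu).length :=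
        Nat.add_le_add (SimpleGraph.dist_le _) (SimpleGraph.dist_le _)
    _ = p.length := hlen

lemma adj_parent_aux {T : LipTree V} {x y : V} (hxy : T.G.Adj x y)
    (hlt : T.G.dist y T.root < T.G.dist x T.root) : x ≠ T.root ∧ y = T.par x := by
  have hconn := T.isTree.isConnected
  have hx : x ≠ T.root := by
    intro h; subst h; simp [SimpleGraph.dist_self] at hlt
  refine ⟨hx, ?_⟩
  have hd1 : T.G.dist x T.root ≤ T.G.dist y T.root + 1 := by
    have htri := hconn.dist_triangle (u := x) (v := y) (w := T.root)
    have hxy1 : T.G.dist x y ≤ 1 := by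
      have := SimpleGraph.dist_le (SimpleGraph.Walk.cons hxy SimpleGraph.Walk.nil)
      simpa using this
    omega
  have hdx : T.G.dist x T.root = T.G.dist y T.root + 1 := by omega
  have hpar := T.dist_par x hx
  by_contra hne
  obtain ⟨q, hq, -⟩ := T.isTree.existsUnique_path y T.root
  obtain ⟨q', hq', -⟩ := T.isTree.existsUnique_path (T.par x) T.root
  have hql : q.length = T.G.dist y T.root := path_length_eq q hq
  have hq'l : q'.length = T.G.dist (T.par x) T.root := path_length_eq q' hq'
  have hxq : x ∉ q.support := by
    intro hmem
    have := support_dist_s4 q hmem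
    omega
  have hxq' : x ∉ q'.support := by
    intro hmem
    have := support_dist_s4 q' hmem
    omega
  have hp1 : (SimpleGraph.Walk.cons hxy q).IsPath := hq.cons hxq
  have hp2 : (SimpleGraph.Walk.cons (T.adj_par x hx) q').IsPath := hq'.cons hxq'
  have heq := (T.isTree.existsUnique_path x T.root).unique hp1 hp2
  have hsup := congrArg SimpleGraph.Walk.support heq
  rw [SimpleGraph.Walk.support_cons, SimpleGraph.Walk.support_cons,
    q.support_eq_cons, q'.support_eq_cons] at hsup
  simp only [List.cons.injEq, true_and] at hsup
  exact hne hsup.1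

/-- Every edge of the tree is a parent edge. -/
lemma adj_parent {T : LipTree V} {x y : V} (hxy : T.G.Adj x y) :
    (x ≠ T.root ∧ y = T.par x) ∨ (y ≠ T.root ∧ x = T.par y) := by
  have hconn := T.isTree.isConnected
  rcases lt_trichotomy (T.G.dist y T.root) (T.G.dist x T.root) with h | h | h
  · exact Or.inl (adj_parent_aux hxy h)
  · exfalso
    rcases Nat.eq_zero_or_pos (T.G.dist x T.root) with h0 | h0
    · have hxr := hconn.dist_eq_zero_iff.mp h0
      have hyr := hconn.dist_eq_zero_iff.mp (h ▸ h0)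
      exact hxy.ne (hxr.trans hyr.symm)
    · obtain ⟨p, hp, -⟩ := T.isTree.existsUnique_path x T.root
      have hpl : p.length = T.G.dist x T.root := path_length_eq p hp
      have hyp : y ∉ p.support := by
        intro hmem
        have h1 := support_dist_s4 p hmem
        have h2 : 0 < T.G.dist x y := hconn.pos_dist_of_ne hxy.ne
        omega
      have hpath : (SimpleGraph.Walk.cons hxy.symm p).IsPath := hp.cons hyp
      have := path_length_eq _ hpath
      rw [SimpleGraph.Walk.length_cons, hpl] at this
      omega
  · exact Or.inr (adj_parent_aux hxy.symm h)

/-- Telescoping estimate along a walk. -/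
lemma telescope_s4 {T : LipTree V} (f : V → ℂ) (δ : ℝ) :
    ∀ {a b : V} (p : T.G.Walk a b),
      (∀ u ∈ p.support, u ≠ T.root → ‖f u - f (T.par u)‖ ≤ δ) →
      ‖f a - f b‖ ≤ δ * p.length := by
  intro a b p
  induction p with
  | nil => intro _; simp
  | @cons u v w h q ih =>
    intro H
    have hedge : ‖f u - f v‖ ≤ δ := by
      rcases adj_parent h with ⟨hu, hv⟩ | ⟨hv, hu⟩
      · have := H u (by simp) hu
        rwa [← hv] at this
      · have := H v (by simp) hv
        rw [norm_sub_rev]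
        rwa [← hu] at this
    have hrest : ‖f v - f w‖ ≤ δ * q.length :=
      ih (fun x hx hxr => H x (by simp [hx]) hxr)
    calc ‖f u - f w‖
        ≤ ‖f u - f v‖ + ‖f v - f w‖ :=
          norm_sub_le_norm_sub_add_norm_sub (f u) (f v) (f w)
      _ ≤ δ + δ * q.length := add_le_add hedge hrest
      _ = δ * ((SimpleGraph.Walk.cons h q).length : ℝ) := by
          rw [SimpleGraph.Walk.length_cons]; push_cast; ring

/-- Balls around the root are finite. -/
lemma ball_finite (T : LipTree V) : ∀ R : ℕ, {u : V | T.G.dist u T.root ≤ R}.Finite := by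
  intro R
  induction R with
  | zero =>
    apply Set.Finite.subset (Set.finite_singleton T.root)
    intro u hu
    simp only [Set.mem_setOf_eq, Nat.le_zero] at hu
    simp [T.isTree.isConnected.dist_eq_zero_iff.mp hu]
  | succ R ih =>
    apply Set.Finite.subset ((ih.biUnion (fun w _ => T.locFin w)).insert T.root)
    intro u hu
    simp only [Set.mem_setOf_eq] at hu
    by_cases hr : u = T.root
    · exact Set.mem_insert_iff.mpr (Or.inl hr)
    · refine Set.mem_insert_iff.mpr (Or.inr ?_)
      refine Set.mem_biUnion (show T.par u ∈ {u | T.G.dist u T.root ≤ R} from ?_) ?_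
      · have := T.dist_par u hr
        simp only [Set.mem_setOf_eq]
        omega
      · exact (T.adj_par u hr).symm

end LipTree

/-- If `φ` is Lipschitz and every preimage `φ⁻¹({v})` is finite, then `C_φ` maps `Lip₀`
into itself; in particular this holds if `φ` is injective. -/
theorem comp_maps_lip0_of_finite_fibers {V : Type*} (T : LipTree V) (φ : V → V)
    (hφ : T.LipschitzSelfMap φ) :
    ((∀ v : V, (φ ⁻¹' {v}).Finite) → ∀ f : V → ℂ, T.MemLip0 f → T.MemLip0 (f ∘ φ)) ∧
    (Function.Injective φ → ∀ f : V → ℂ, T.MemLip0 f → T.MemLip0 (f ∘ φ)) := by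
  have main : (∀ v : V, (φ ⁻¹' {v}).Finite) → ∀ f : V → ℂ, T.MemLip0 f → T.MemLip0 (f ∘ φ) := by
    intro hfib f hf
    obtain ⟨C, hC⟩ := hφ
    obtain ⟨⟨K, hK⟩, hε⟩ := hf
    have hconn := T.isTree.isConnected
    constructor
    · refine ⟨max K 0 * C, fun v hv => ?_⟩
      obtain ⟨p, hp⟩ := hconn.exists_walk_length_eq_dist (φ v) (φ (T.par v))
      have hb := LipTree.telescope_s4 f (max K 0) p
        (fun u _ hu => le_trans (hK u hu) (le_max_left _ _))
      simp only [Function.comp_apply]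
      refine hb.trans ?_
      have hlen : (p.length : ℝ) ≤ C := by
        rw [hp]; exact_mod_cast hC v hv
      exact mul_le_mul_of_nonneg_left hlen (le_max_right K 0)
    · intro ε hε'
      set δ := ε / (C + 1) with hδdef
      have hδpos : 0 < δ := by positivity
      obtain ⟨N₁, hN₁⟩ := hε δ hδpos
      have hball := LipTree.ball_finite T (N₁ + C)
      have hF : (φ ⁻¹' {u | T.G.dist u T.root ≤ N₁ + C}).Finite := by
        rw [← Set.biUnion_preimage_singleton]
        exact hball.biUnion (fun w _ => hfib w)
      obtain ⟨M, hM⟩ := (hF.image T.depth).bddAbove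
      refine ⟨M + 1, fun v hv hdv => ?_⟩
      have hdepthφ : N₁ + C + 1 ≤ T.G.dist (φ v) T.root := by
        by_contra hcon
        push_neg at hcon
        have hvF : v ∈ φ ⁻¹' {u | T.G.dist u T.root ≤ N₁ + C} := by
          simp only [Set.mem_preimage, Set.mem_setOf_eq]
          omega
        have := hM (Set.mem_image_of_mem T.depth hvF)
        unfold LipTree.depth at this hdv
        omega
      obtain ⟨p, hp⟩ := hconn.exists_walk_length_eq_dist (φ v) (φ (T.par v))
      have hplen : p.length ≤ C := hp ▸ hC v hv
      have hsup : ∀ u ∈ p.support, u ≠ T.root → ‖f u - f (T.par u)‖ ≤ δ := by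
        intro u hu hur
        refine le_of_lt (hN₁ u hur ?_)
        have h1 := LipTree.support_dist_s4 p hu
        have h2 := hconn.dist_triangle (u := φ v) (v := u) (w := T.root)
        unfold LipTree.depth
        omega
      have hbound := LipTree.telescope_s4 f δ p hsup
      simp only [Function.comp_apply]
      refine lt_of_le_of_lt hbound ?_
      have hle : δ * p.length ≤ δ * C :=
        mul_le_mul_of_nonneg_left (by exact_mod_cast hplen) hδpos.le
      refine hle.trans_lt ?_
      have hlt : δ * C < δ * (C + 1) := by
        apply mul_lt_mul_of_pos_left _ hδpos
        exact_mod_cast lt_add_one (C : ℝ)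
      refine hlt.trans_le ?_
      rw [hδdef]
      rw [div_mul_cancel₀]
      positivity
  refine ⟨main, fun hinj => main (fun v => ?_)⟩
  apply Set.Subsingleton.finite
  intro a ha b hb
  simp only [Set.mem_preimage, Set.mem_singleton_iff] at ha hb
  exact hinj (ha.trans hb.symm)
end

section
/- Let φ : T → T be Lipschitz and A = { v ∈ T : φ is not constant on S_v }. If A is infinite and |φ(v)| does not tend to infinity as |v| → ∞ along v ∈ A, then there exists f ∈ Lip_0(T) such that f ∘ φ ∉ Lip_0(T). -/
namespace LipTreeAux

open LipTree

variable {V : Type*} (T : LipTree V)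

lemma conn : T.G.Connected := T.isTree.isConnected

lemma depth_root : T.depth T.root = 0 := SimpleGraph.dist_self

lemma depth_par_add_one {v : V} (h : v ≠ T.root) :
    T.depth (T.par v) + 1 = T.depth v := T.dist_par v h

lemma ne_root_of_depth {v : V} (h : 1 ≤ T.depth v) : v ≠ T.root := by
  rintro rfl; rw [depth_root] at h; omega

lemma one_le_depth {v : V} (h : v ≠ T.root) : 1 ≤ T.depth v := by
  have := depth_par_add_one T h; omega

lemma iterate_root (k : ℕ) : T.par^[k] T.root = T.root :=
  Function.iterate_fixed T.par_root k

lemma depth_iterate : ∀ (k : ℕ) (u : V), T.par^[k] u ≠ T.root →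
    T.depth u = T.depth (T.par^[k] u) + k := by
  intro k
  induction k with
  | zero => intro u h; simp
  | succ k ih =>
    intro u h
    have hu : u ≠ T.root := by
      rintro rfl; exact h (iterate_root T _)
    rw [Function.iterate_succ_apply] at h ⊢
    have := ih (T.par u) h
    have h2 := depth_par_add_one T hu
    omega

lemma depth_le (a b : V) : T.depth a ≤ T.G.dist a b + T.depth b :=
  (conn T).dist_triangle

lemma ball_finite : ∀ R : ℕ, {v : V | T.depth v ≤ R}.Finite := by
  intro R
  induction R with
  | zero =>
    apply Set.Finite.subset (Set.finite_singleton T.root)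
    intro v hv
    simp only [Set.mem_setOf_eq, Nat.le_zero] at hv
    exact (conn T).dist_eq_zero_iff.mp hv
  | succ R ih =>
    have : {v : V | T.depth v ≤ R + 1} ⊆
        {v : V | T.depth v ≤ R} ∪ ⋃ w ∈ {v : V | T.depth v ≤ R}, T.G.neighborSet w := by
      intro v hv
      simp only [Set.mem_setOf_eq] at hv
      by_cases hR : T.depth v ≤ R
      · exact Or.inl hR
      · have hd : T.depth v = R + 1 := by omega
        have hv0 : v ≠ T.root := ne_root_of_depth T (by omega)
        refine Or.inr ?_
        refine Set.mem_biUnion (show T.depth (T.par v) ≤ R by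
          have := depth_par_add_one T hv0; omega) ?_
        exact (T.adj_par v hv0).symm
    exact Set.Finite.subset (ih.union (ih.biUnion fun w _ => T.locFin w)) this

lemma sector_step (φ : V → V) {v : V} (hv : v ≠ T.root)
    (hnc : ¬ ∀ u₁ u₂ : V, T.InSector v u₁ → T.InSector v u₂ → φ u₁ = φ u₂) :
    ∃ (u : V) (k : ℕ), T.par^[k] u = v ∧ u ≠ T.root ∧ φ u ≠ φ (T.par u) ∧
      φ (T.par u) = φ v := by
  push_neg at hnc
  obtain ⟨u₁, u₂, ⟨k₁, hk₁⟩, ⟨k₂, hk₂⟩, h12⟩ := hnc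
  have hex : ∃ k, ∃ u : V, T.par^[k] u = v ∧ φ u ≠ φ v := by
    by_cases h1 : φ u₁ = φ v
    · exact ⟨k₂, u₂, hk₂, fun h => h12 (h1.trans h.symm)⟩
    · exact ⟨k₁, u₁, hk₁, h1⟩
  classical
  obtain ⟨u, hku, hne⟩ := Nat.find_spec hex
  set k := Nat.find hex with hk
  have hk1 : 1 ≤ k := by
    rcases Nat.eq_zero_or_pos k with h0 | h; swap; · exact h
    exfalso; rw [h0] at hku; simp at hku; exact hne (by rw [hku])
  have hpar : φ (T.par u) = φ v := by
    by_contra h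
    have hlt : k - 1 < k := by omega
    refine Nat.find_min hex hlt ⟨T.par u, ?_, h⟩
    rw [← Function.iterate_succ_apply, Nat.succ_eq_add_one,
      show k - 1 + 1 = k by omega]
    exact hku
  have hur : u ≠ T.root := by
    rintro rfl; rw [iterate_root] at hku; exact hv hku.symm
  exact ⟨u, k, hku, hur, fun h => hne (h.trans hpar), hpar⟩

end LipTreeAux

/-- If `A` (the set of `v` on whose sector `φ` is not constant) is infinite and `|φ(v)|`
does not tend to `∞` along `v ∈ A`, then some `f ∈ Lip₀` has `f ∘ φ ∉ Lip₀`. -/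
theorem exists_not_lip0 {V : Type*} (T : LipTree V) (φ : V → V)
    (hφ : T.LipschitzSelfMap φ)
    (A : Set V)
    (hA : A = {v : V | ¬ ∀ u₁ u₂ : V, T.InSector v u₁ → T.InSector v u₂ → φ u₁ = φ u₂})
    (hAinf : A.Infinite)
    (hnd : ¬ ∀ M : ℕ, ∃ N : ℕ, ∀ v ∈ A, N ≤ T.depth v → M ≤ T.depth (φ v)) :
    ∃ f : V → ℂ, T.MemLip0 f ∧ ¬ T.MemLip0 (f ∘ φ) := by
  classical
  open LipTreeAux in
  obtain ⟨C, hC⟩ := hφ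
  push_neg at hnd
  obtain ⟨M, hM⟩ := hnd
  -- key: for every n there is a deep vertex u with φ u ≠ φ (par u), both images shallow
  have key : ∀ n : ℕ, ∃ u : V, u ≠ T.root ∧ n ≤ T.depth u ∧ φ u ≠ φ (T.par u) ∧
      T.depth (φ u) ≤ M + C ∧ T.depth (φ (T.par u)) ≤ M + C := by
    intro n
    obtain ⟨v, hvA, hvd, hvM⟩ := hM (max n 1)
    have hv1 : 1 ≤ T.depth v := le_trans (le_max_right n 1) hvd
    have hvr : v ≠ T.root := ne_root_of_depth T hv1
    have hnc : ¬ ∀ u₁ u₂ : V, T.InSector v u₁ → T.InSector v u₂ → φ u₁ = φ u₂ := by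
      rw [hA] at hvA; exact hvA
    obtain ⟨u, k, hku, hur, hune, hupar⟩ := sector_step T φ hvr hnc
    refine ⟨u, hur, ?_, hune, ?_, ?_⟩
    · have := depth_iterate T k u (by rw [hku]; exact hvr)
      rw [hku] at this
      have := le_trans (le_max_left n 1) hvd
      omega
    · have h1 : T.depth (φ u) ≤ T.G.dist (φ u) (φ (T.par u)) + T.depth (φ (T.par u)) :=
        depth_le T _ _
      have h2 := hC u hur
      rw [hupar] at h1 h2
      omega
    · rw [hupar]; omega
  choose u hu1 hu2 hu3 hu4 hu5 using key
  -- pigeonhole: a pair of distinct shallow values recurs for arbitrarily deep u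
  set B := {v : V | T.depth v ≤ M + C} with hB
  have hBfin : B.Finite := ball_finite T (M + C)
  haveI : Finite B := hBfin.to_subtype
  let g : ℕ → B × B := fun n => (⟨φ (u n), hu4 n⟩, ⟨φ (T.par (u n)), hu5 n⟩)
  obtain ⟨⟨a, b⟩, hfib⟩ := Finite.exists_infinite_fiber g
  have hfib' : (g ⁻¹' {(a, b)}).Infinite := Set.infinite_coe_iff.mp hfib
  obtain ⟨n₀, hn₀, -⟩ := hfib'.exists_gt 0
  have hgn : ∀ n ∈ g ⁻¹' {(a, b)}, φ (u n) = (a : V) ∧ φ (T.par (u n)) = (b : V) := by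
    intro n hn
    simp only [Set.mem_preimage, Set.mem_singleton_iff, g, Prod.mk.injEq, Subtype.ext_iff] at hn
    exact hn
  have hab : (a : V) ≠ (b : V) := by
    obtain ⟨h1, h2⟩ := hgn n₀ hn₀
    rw [← h1, ← h2]; exact hu3 n₀
  -- the function: indicator of a
  refine ⟨fun x => if x = (a : V) then (1 : ℂ) else 0, ⟨⟨2, ?_⟩, ?_⟩, ?_⟩
  · intro v hv
    have h1 : ∀ x : V, ‖(if x = (a : V) then (1 : ℂ) else 0)‖ ≤ 1 := by
      intro x; by_cases h : x = (a : V) <;> simp [h]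
    calc ‖(if v = (a : V) then (1 : ℂ) else 0) -
          (if T.par v = (a : V) then (1 : ℂ) else 0)‖
        ≤ ‖(if v = (a : V) then (1 : ℂ) else 0)‖ +
          ‖(if T.par v = (a : V) then (1 : ℂ) else 0)‖ := by
          simpa [sub_eq_add_neg] using
            norm_add_le (if v = (a : V) then (1 : ℂ) else 0)
              (-(if T.par v = (a : V) then (1 : ℂ) else 0))
      _ ≤ 2 := by linarith [h1 v, h1 (T.par v)]
  · intro ε hε
    refine ⟨T.depth (a : V) + 2, fun v hv hdv => ?_⟩
    have hpd := LipTreeAux.depth_par_add_one T hv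
    have h1 : v ≠ (a : V) := fun h => by rw [h] at hdv; omega
    have h2 : T.par v ≠ (a : V) := fun h => by rw [h] at hpd; omega
    simp [h1, h2, hε]
  · rintro ⟨-, hsm⟩
    obtain ⟨N, hN⟩ := hsm 1 one_pos
    obtain ⟨n, hn, hNn⟩ := hfib'.exists_gt N
    obtain ⟨ha, hb⟩ := hgn n hn
    have := hN (u n) (hu1 n) (le_trans (le_of_lt hNn) (hu2 n))
    simp only [Function.comp_apply, ha, hb, if_pos rfl, if_neg (Ne.symm hab)] at this
    simp at this
end

section
/- If the composition operator C_φ is bounded on Lip_0(T), then C_φ is bounded on Lip(T), and consequently φ is a Lipschitz self-map of T. -/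
namespace LipTreeAux

open LipTree

variable {V : Type*} (T : LipTree V)

noncomputable def trunc (f : V → ℂ) (N : ℕ) : V → ℂ :=
  fun u => f (T.par^[T.depth u - N] u)

lemma depth_par {v : V} (hv : v ≠ T.root) : T.depth (T.par v) + 1 = T.depth v :=
  T.dist_par v hv

lemma trunc_eq_of_le {f : V → ℂ} {N : ℕ} {u : V} (h : T.depth u ≤ N) :
    trunc T f N u = f u := by
  simp [trunc, Nat.sub_eq_zero_of_le h]

lemma trunc_eq_par {f : V → ℂ} {N : ℕ} {u : V} (hu : u ≠ T.root) (h : N < T.depth u) :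
    trunc T f N u = trunc T f N (T.par u) := by
  have hd := depth_par T hu
  have h1 : T.depth u - N = (T.depth (T.par u) - N) + 1 := by omega
  unfold trunc
  rw [h1, Function.iterate_succ_apply]

def dset (f : V → ℂ) : Set ℝ :=
  {r : ℝ | ∃ v : V, v ≠ T.root ∧ r = ‖f v - f (T.par v)‖}

lemma normLip_eq (f : V → ℂ) :
    T.normLip f = max (‖f T.root‖) (sSup (dset T f)) := rfl

lemma normLip_nonneg (f : V → ℂ) : 0 ≤ T.normLip f :=
  le_trans (norm_nonneg _) (le_max_left _ _)

lemma bddAbove_dset {f : V → ℂ} (hf : T.MemLip f) : BddAbove (dset T f) := by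
  obtain ⟨C, hC⟩ := hf
  exact ⟨C, by rintro r ⟨v, hv, rfl⟩; exact hC v hv⟩

lemma diff_le_normLip {f : V → ℂ} (hf : T.MemLip f) {v : V} (hv : v ≠ T.root) :
    ‖f v - f (T.par v)‖ ≤ T.normLip f :=
  le_trans (le_csSup (bddAbove_dset T hf) ⟨v, hv, rfl⟩) (le_max_right _ _)

lemma memLip_trunc {f : V → ℂ} (hf : T.MemLip f) (N : ℕ) : T.MemLip (trunc T f N) := by
  refine ⟨T.normLip f, fun v hv => ?_⟩
  rcases le_or_gt (T.depth v) N with hle | hlt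
  · have hple : T.depth (T.par v) ≤ N := by have := depth_par T hv; omega
    rw [trunc_eq_of_le T hle, trunc_eq_of_le T hple]
    exact diff_le_normLip T hf hv
  · rw [trunc_eq_par T hv hlt]
    simpa using normLip_nonneg T f

lemma memLip0_trunc {f : V → ℂ} (hf : T.MemLip f) (N : ℕ) : T.MemLip0 (trunc T f N) := by
  refine ⟨memLip_trunc T hf N, fun ε hε => ⟨N + 1, fun v hv hdv => ?_⟩⟩
  rw [trunc_eq_par T hv (by omega)]
  simpa using hε

lemma normLip_trunc_le {f : V → ℂ} (hf : T.MemLip f) (N : ℕ) :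
    T.normLip (trunc T f N) ≤ T.normLip f := by
  rw [normLip_eq]
  refine max_le ?_ (Real.sSup_le ?_ (normLip_nonneg T f))
  · rw [trunc_eq_of_le T (by rw [depth_root]; exact Nat.zero_le _)]
    exact le_max_left _ _
  · rintro r ⟨v, hv, rfl⟩
    rcases le_or_gt (T.depth v) N with hle | hlt
    · have hple : T.depth (T.par v) ≤ N := by have := depth_par T hv; omega
      rw [trunc_eq_of_le T hle, trunc_eq_of_le T hple]
      exact diff_le_normLip T hf hv
    · rw [trunc_eq_par T hv hlt]
      simpa using normLip_nonneg T f

end LipTreeAux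

/-- If `C_φ` is bounded on `Lip₀(T)` then `C_φ` is bounded on `Lip(T)`; consequently `φ`
is a Lipschitz self-map of `T`. -/
theorem bounded_on_lip_of_bounded_on_lip0 {V : Type*} (T : LipTree V) (φ : V → V)
    (h : T.BoundedOnLip0 φ) :
    (∀ f : V → ℂ, T.MemLip f → T.MemLip (f ∘ φ)) ∧
    (∃ C : ℝ, ∀ f : V → ℂ, T.MemLip f → T.normLip (f ∘ φ) ≤ C * T.normLip f) ∧
    T.LipschitzSelfMap φ := by
  open LipTreeAux in
  obtain ⟨hmap, C, hC⟩ := h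
  set C' : ℝ := max C 0 with hC'
  have hC'0 : 0 ≤ C' := le_max_right _ _
  -- norm bound for truncations of f composed with φ
  have hcomp : ∀ (f : V → ℂ), T.MemLip f → ∀ N : ℕ,
      T.normLip (trunc T f N ∘ φ) ≤ C' * T.normLip f := by
    intro f hf N
    have h1 := hC _ (memLip0_trunc T hf N)
    calc T.normLip (trunc T f N ∘ φ) ≤ C * T.normLip (trunc T f N) := h1
      _ ≤ C' * T.normLip (trunc T f N) :=
          mul_le_mul_of_nonneg_right (le_max_left _ _) (normLip_nonneg T _)
      _ ≤ C' * T.normLip f :=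
          mul_le_mul_of_nonneg_left (normLip_trunc_le T hf N) hC'0
  -- key pointwise estimates
  have hstar : ∀ (f : V → ℂ), T.MemLip f → ∀ v : V, v ≠ T.root →
      ‖(f ∘ φ) v - (f ∘ φ) (T.par v)‖ ≤ C' * T.normLip f := by
    intro f hf v hv
    set N := max (T.depth (φ v)) (T.depth (φ (T.par v))) with hN
    have e1 : trunc T f N (φ v) = f (φ v) := trunc_eq_of_le T (le_max_left _ _)
    have e2 : trunc T f N (φ (T.par v)) = f (φ (T.par v)) :=
      trunc_eq_of_le T (le_max_right _ _)
    have hg : T.MemLip (trunc T f N ∘ φ) := (hmap _ (memLip0_trunc T hf N)).1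
    have := diff_le_normLip T hg hv
    simp only [Function.comp_apply, e1, e2] at this ⊢
    exact le_trans this (hcomp f hf N)
  have hroot : ∀ (f : V → ℂ), T.MemLip f →
      ‖(f ∘ φ) T.root‖ ≤ C' * T.normLip f := by
    intro f hf
    set N := T.depth (φ T.root) with hN
    have e1 : trunc T f N (φ T.root) = f (φ T.root) := trunc_eq_of_le T le_rfl
    have h1 : ‖(trunc T f N ∘ φ) T.root‖ ≤ T.normLip (trunc T f N ∘ φ) :=
      le_max_left _ _
    simp only [Function.comp_apply, e1] at h1 ⊢
    exact le_trans h1 (hcomp f hf N)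
  have hmemLip : ∀ f : V → ℂ, T.MemLip f → T.MemLip (f ∘ φ) :=
    fun f hf => ⟨C' * T.normLip f, hstar f hf⟩
  have hbound : ∀ f : V → ℂ, T.MemLip f → T.normLip (f ∘ φ) ≤ C' * T.normLip f := by
    intro f hf
    refine max_le (hroot f hf) (Real.sSup_le ?_ (mul_nonneg hC'0 (normLip_nonneg T f)))
    rintro r ⟨v, hv, rfl⟩
    exact hstar f hf v hv
  refine ⟨hmemLip, ⟨C', hbound⟩, ⟨⌈C'⌉₊, fun v hv => ?_⟩⟩
  -- test function for the Lipschitz self-map property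
  set w := φ (T.par v) with hw
  set f : V → ℂ := fun u => ((T.G.dist u w : ℝ) - (T.G.dist T.root w : ℝ) : ℂ) with hfdef
  have hdconn := T.isTree.isConnected
  have hdiff1 : ∀ u : V, u ≠ T.root →
      ‖f u - f (T.par u)‖ ≤ 1 := by
    intro u hu
    have hadj : T.G.dist u (T.par u) = 1 :=
      (SimpleGraph.dist_eq_one_iff_adj).2 (T.adj_par u hu)
    have ht1 : T.G.dist u w ≤ T.G.dist u (T.par u) + T.G.dist (T.par u) w :=
      hdconn.dist_triangle
    have ht2 : T.G.dist (T.par u) w ≤ T.G.dist (T.par u) u + T.G.dist u w :=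
      hdconn.dist_triangle
    have hsym : T.G.dist (T.par u) u = T.G.dist u (T.par u) := SimpleGraph.dist_comm
    have hb1 : T.G.dist u w ≤ T.G.dist (T.par u) w + 1 := by omega
    have hb2 : T.G.dist (T.par u) w ≤ T.G.dist u w + 1 := by omega
    have hc1 := (Nat.cast_le (α := ℝ)).2 hb1
    have hc2 := (Nat.cast_le (α := ℝ)).2 hb2
    push_cast at hc1 hc2
    have heq : f u - f (T.par u) =
        (((T.G.dist u w : ℝ) - (T.G.dist (T.par u) w : ℝ) : ℝ) : ℂ) := by
      simp only [hfdef]; push_cast; ring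
    rw [heq, Complex.norm_real, Real.norm_eq_abs, abs_sub_le_iff]
    constructor <;> linarith
  have hfLip : T.MemLip f := ⟨1, hdiff1⟩
  have hnf : T.normLip f ≤ 1 := by
    refine max_le ?_ (Real.sSup_le ?_ zero_le_one)
    · simp [hfdef]
    · rintro r ⟨u, hu, rfl⟩; exact hdiff1 u hu
  have hkey : (T.G.dist (φ v) w : ℝ) ≤ T.normLip (f ∘ φ) := by
    have hgLip : T.MemLip (f ∘ φ) := hmemLip f hfLip
    have := diff_le_normLip T hgLip hv
    have he : ‖(f ∘ φ) v - (f ∘ φ) (T.par v)‖ = (T.G.dist (φ v) w : ℝ) := by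
      simp only [Function.comp_apply, hfdef, ← hw, SimpleGraph.dist_self]
      have : (((T.G.dist (φ v) w : ℝ)) : ℂ) - (((0 : ℕ) : ℝ) : ℂ) =
          (((T.G.dist (φ v) w : ℝ)) : ℂ) := by push_cast; ring
      rw [show ((T.G.dist (φ v) w : ℝ) : ℂ) - ((T.G.dist T.root w : ℝ) : ℂ) -
          (((0:ℕ) : ℝ) - (T.G.dist T.root w : ℝ) : ℂ) = ((T.G.dist (φ v) w : ℝ) : ℂ) by
        push_cast; ring]
      rw [Complex.norm_real, Real.norm_eq_abs, abs_of_nonneg (by positivity)]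
    rw [he] at this
    exact this
  have hfin : (T.G.dist (φ v) w : ℝ) ≤ C' := by
    calc (T.G.dist (φ v) w : ℝ) ≤ T.normLip (f ∘ φ) := hkey
      _ ≤ C' * T.normLip f := hbound f hfLip
      _ ≤ C' * 1 := mul_le_mul_of_nonneg_left hnf hC'0
      _ = C' := mul_one _
  have : (T.G.dist (φ v) w : ℝ) ≤ (⌈C'⌉₊ : ℝ) := le_trans hfin (Nat.le_ceil _)
  exact_mod_cast this
end

section
/- Let φ : T → T be injective but not surjective, with C_φ bounded on Lip_0(T). Then every λ with |λ| < 1, as well as λ = 1, is an eigenvalue of C_φ acting on Lip_0(T). -/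
section Aux

variable {V : Type*}

open Classical in
/-- The candidate eigenfunction supported on the orbit of `w`. -/
noncomputable def eigFun (φ : V → V) (w : V) (lam : ℂ) : V → ℂ :=
  fun v => if h : ∃ n, φ^[n] w = v then lam ^ h.choose else 0

lemma orbit_uniq {φ : V → V} (hinj : Function.Injective φ) {w : V}
    (hw : ∀ v, φ v ≠ w) : ∀ m n : ℕ, φ^[m] w = φ^[n] w → m = n := by
  have key : ∀ m n : ℕ, m < n → φ^[m] w = φ^[n] w → False := by
    intro m n hlt h
    obtain ⟨k, rfl⟩ : ∃ k, n = m + (k + 1) := ⟨n - m - 1, by omega⟩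
    rw [Function.iterate_add_apply] at h
    have h2 : w = φ^[k+1] w := (hinj.iterate m) h
    rw [Function.iterate_succ_apply'] at h2
    exact hw _ h2.symm
  intro m n h
  rcases lt_trichotomy m n with hlt | he | hlt
  · exact absurd h (fun h => key m n hlt h)
  · exact he
  · exact absurd h.symm (fun h => key n m hlt h)

lemma eigFun_orbit {φ : V → V} (hinj : Function.Injective φ) {w : V}
    (hw : ∀ v, φ v ≠ w) (lam : ℂ) (n : ℕ) :
    eigFun φ w lam (φ^[n] w) = lam ^ n := by
  have h : ∃ m, φ^[m] w = φ^[n] w := ⟨n, rfl⟩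
  simp only [eigFun, dif_pos h]
  congr 1
  exact orbit_uniq hinj hw _ _ h.choose_spec

lemma eigFun_not_orbit {φ : V → V} {w : V} (lam : ℂ) {v : V}
    (h : ¬ ∃ n, φ^[n] w = v) : eigFun φ w lam v = 0 := by
  unfold eigFun
  exact dif_neg h

lemma eigFun_abs_le_one {φ : V → V} {w : V} {lam : ℂ}
    (hlam : ‖lam‖ ≤ 1) (v : V) :
    ‖eigFun φ w lam v‖ ≤ 1 := by
  unfold eigFun
  split
  · rw [norm_pow]
    exact pow_le_one₀ (norm_nonneg _) hlam
  · simp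

lemma eigFun_comp {φ : V → V} (hinj : Function.Injective φ) {w : V}
    (hw : ∀ v, φ v ≠ w) (lam : ℂ) :
    (eigFun φ w lam) ∘ φ = lam • eigFun φ w lam := by
  funext v
  simp only [Function.comp_apply, Pi.smul_apply, smul_eq_mul]
  by_cases h : ∃ n, φ^[n] w = v
  · obtain ⟨n, rfl⟩ := h
    have h1 : φ (φ^[n] w) = φ^[n+1] w := (Function.iterate_succ_apply' φ n w).symm
    rw [h1, eigFun_orbit hinj hw, eigFun_orbit hinj hw, pow_succ, mul_comm]
  · have h2 : ¬ ∃ n, φ^[n] w = φ v := by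
      rintro ⟨n, hn⟩
      cases n with
      | zero => exact hw v hn.symm
      | succ k =>
          rw [Function.iterate_succ_apply'] at hn
          exact h ⟨k, hinj hn⟩
    rw [eigFun_not_orbit lam h, eigFun_not_orbit lam h2, mul_zero]

lemma depth_par {T : LipTree V} {v : V} (hv : v ≠ T.root) :
    T.depth (T.par v) + 1 = T.depth v := T.dist_par v hv

end Aux

/-- If `φ` is injective but not surjective and `C_φ` is bounded on `Lip₀`, then `1` and
every `λ` with `|λ| < 1` are eigenvalues of `C_φ`. -/
theorem point_spectrum_contains_disk {V : Type*} (T : LipTree V) (φ : V → V)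
    (hinj : Function.Injective φ) (hnsurj : ¬ Function.Surjective φ)
    (hbdd : T.BoundedOnLip0 φ) :
    ∀ lam : ℂ, (‖lam‖ < 1 ∨ lam = 1) →
      ∃ f : V → ℂ, T.MemLip0 f ∧ f ≠ 0 ∧ f ∘ φ = lam • f := by
  classical
  intro lam hlam
  rcases hlam with hlt | rfl
  · -- |lam| < 1
    simp only [Function.Surjective, not_forall, not_exists] at hnsurj
    obtain ⟨w, hw⟩ := hnsurj
    refine ⟨eigFun φ w lam, ⟨⟨2, ?_⟩, ?_⟩, ?_, eigFun_comp hinj hw lam⟩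
    · -- Lipschitz bound
      intro v hv
      calc ‖eigFun φ w lam v - eigFun φ w lam (T.par v)‖
          ≤ ‖eigFun φ w lam v‖ + ‖eigFun φ w lam (T.par v)‖ :=
            norm_sub_le _ _
        _ ≤ 1 + 1 := add_le_add (eigFun_abs_le_one hlt.le v) (eigFun_abs_le_one hlt.le _)
        _ = 2 := by norm_num
    · -- little Lipschitz condition
      intro ε hε
      have htend : Filter.Tendsto (fun n : ℕ => ‖lam‖ ^ n) Filter.atTop (nhds 0) :=
        tendsto_pow_atTop_nhds_zero_of_lt_one (norm_nonneg _) hlt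
      obtain ⟨N0, hN0⟩ := Filter.eventually_atTop.1
        (htend.eventually (gt_mem_nhds (half_pos hε)))
      set D : ℕ := (Finset.range N0).sup (fun n => T.depth (φ^[n] w)) with hD
      have key : ∀ u : V, D + 1 ≤ T.depth u → ‖eigFun φ w lam u‖ < ε / 2 := by
        intro u hu
        by_cases h : ∃ n, φ^[n] w = u
        · obtain ⟨n, rfl⟩ := h
          rw [eigFun_orbit hinj hw, norm_pow]
          rcases lt_or_ge n N0 with hn | hn
          · exfalso
            have : T.depth (φ^[n] w) ≤ D :=
              Finset.le_sup (f := fun n => T.depth (φ^[n] w)) (Finset.mem_range.2 hn)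
            omega
          · exact hN0 n hn
        · rw [eigFun_not_orbit lam h]
          simpa using half_pos hε
      refine ⟨D + 2, fun v hv hdv => ?_⟩
      have hpar : T.depth (T.par v) + 1 = T.depth v := depth_par hv
      calc ‖eigFun φ w lam v - eigFun φ w lam (T.par v)‖
          ≤ ‖eigFun φ w lam v‖ + ‖eigFun φ w lam (T.par v)‖ :=
            norm_sub_le _ _
        _ < ε / 2 + ε / 2 :=
            add_lt_add (key v (by omega)) (key (T.par v) (by omega))
        _ = ε := add_halves ε
    · -- nonzero
      intro h
      have h0 : eigFun φ w lam w = 1 := by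
        simpa using eigFun_orbit hinj hw lam 0
      rw [h] at h0
      simpa using h0
  · -- lam = 1 : constant function
    refine ⟨fun _ => 1, ⟨⟨0, fun v hv => by simp⟩, fun ε hε => ⟨0, fun v _ _ => by simpa using hε⟩⟩,
      fun h => by simpa using congrFun h T.root, ?_⟩
    funext v
    simp
end

section
/- Let φ : T → T be injective and |λ| < 1. Then the operator C_φ − λ·Id has dense range on Lip_0(T); more precisely, for every vertex w, the characteristic function χ_{w} lies in the range of C_φ − λ. -/
namespace DenseAux
open LipTree
open scoped Classical

variable {V : Type*}

theorem habs (x y : ℂ) : ‖x - y‖ ≤ ‖x‖ + ‖y‖ := by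
  simpa [sub_eq_add_neg] using norm_add_le x (-y)

theorem depth_root (T : LipTree V) : T.depth T.root = 0 := SimpleGraph.dist_self

theorem depth_eq_zero_iff (T : LipTree V) (v : V) : T.depth v = 0 ↔ v = T.root := by
  unfold LipTree.depth
  rw [T.isTree.isConnected.dist_eq_zero_iff]

theorem depth_par (T : LipTree V) (v : V) (hv : v ≠ T.root) :
    T.depth (T.par v) + 1 = T.depth v := T.dist_par v hv

theorem depth_iterate_le (T : LipTree V) (k : ℕ) (v : V) :
    T.depth (T.par^[k] v) ≤ T.depth v - k := by
  induction k generalizing v with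
  | zero => simp
  | succ k ih =>
    rw [Function.iterate_succ_apply]
    by_cases hv : v = T.root
    · subst hv
      rw [T.par_root]
      have := ih T.root
      have h0 := depth_root T
      omega
    · have h1 := depth_par T v hv
      have := ih (T.par v)
      omega

theorem parPreimage_finite (T : LipTree V) (u : V) : {v | T.par v = u}.Finite := by
  apply Set.Finite.subset ((T.locFin u).insert T.root)
  intro v hv
  by_cases h : v = T.root
  · exact Or.inl h
  · refine Or.inr ?_
    have := (T.adj_par v h).symm
    rw [hv] at this
    exact this

theorem ball_finite (T : LipTree V) (N : ℕ) : {v | T.depth v ≤ N}.Finite := by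
  induction N with
  | zero =>
    apply Set.Finite.subset (Set.finite_singleton T.root)
    intro v hv
    have : T.depth v = 0 := Nat.le_zero.mp hv
    exact (depth_eq_zero_iff T v).mp this
  | succ N ih =>
    have h2 : {v | T.depth v ≤ N + 1} ⊆ insert T.root (T.par ⁻¹' {v | T.depth v ≤ N}) := by
      intro v hv
      by_cases h : v = T.root
      · exact Or.inl h
      · refine Or.inr ?_
        have := depth_par T v h
        simp only [Set.mem_preimage, Set.mem_setOf_eq]
        simp only [Set.mem_setOf_eq] at hv
        omega
    refine Set.Finite.subset (Set.Finite.insert _ ?_) h2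
    have : T.par ⁻¹' {v | T.depth v ≤ N} = ⋃ u ∈ {v | T.depth v ≤ N}, {v | T.par v = u} := by
      ext x; simp
    rw [this]
    exact Set.Finite.biUnion ih (fun u _ => parPreimage_finite T u)


theorem memLip0_const (T : LipTree V) (c : ℂ) : T.MemLip0 (fun _ => c) := by
  constructor
  · exact ⟨0, fun v _ => by simp⟩
  · intro ε hε; exact ⟨0, fun v _ _ => by simpa using hε⟩

theorem memLip0_add (T : LipTree V) {f g : V → ℂ} (hf : T.MemLip0 f) (hg : T.MemLip0 g) :
    T.MemLip0 (fun v => f v + g v) := by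
  obtain ⟨⟨C1, hC1⟩, hf2⟩ := hf
  obtain ⟨⟨C2, hC2⟩, hg2⟩ := hg
  have key : ∀ v : V, (f v + g v) - (f (T.par v) + g (T.par v))
      = (f v - f (T.par v)) + (g v - g (T.par v)) := fun v => by ring
  constructor
  · refine ⟨C1 + C2, fun v hv => ?_⟩
    rw [key v]
    exact (norm_add_le _ _).trans (add_le_add (hC1 v hv) (hC2 v hv))
  · intro ε hε
    obtain ⟨N1, h1⟩ := hf2 (ε / 2) (by linarith)
    obtain ⟨N2, h2⟩ := hg2 (ε / 2) (by linarith)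
    refine ⟨max N1 N2, fun v hv hN => ?_⟩
    rw [key v]
    calc ‖_‖ ≤ _ := norm_add_le _ _
      _ < ε / 2 + ε / 2 := by
          exact add_lt_add (h1 v hv (le_trans (le_max_left _ _) hN))
            (h2 v hv (le_trans (le_max_right _ _) hN))
      _ = ε := by ring

theorem memLip0_smul (T : LipTree V) (c : ℂ) {f : V → ℂ} (hf : T.MemLip0 f) :
    T.MemLip0 (fun v => c * f v) := by
  obtain ⟨⟨C1, hC1⟩, hf2⟩ := hf
  have key : ∀ v : V, ‖c * f v - c * f (T.par v)‖
      = ‖c‖ * ‖f v - f (T.par v)‖ := by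
    intro v; rw [← mul_sub, norm_mul]
  constructor
  · refine ⟨‖c‖ * C1, fun v hv => ?_⟩
    rw [key v]
    exact mul_le_mul_of_nonneg_left (hC1 v hv) (norm_nonneg c)
  · intro ε hε
    by_cases hc : c = 0
    · exact ⟨0, fun v _ _ => by simpa [hc] using hε⟩
    · have hcpos : 0 < ‖c‖ := norm_pos_iff.mpr hc
      obtain ⟨N, hN⟩ := hf2 (ε / ‖c‖) (div_pos hε hcpos)
      refine ⟨N, fun v hv hd => ?_⟩
      rw [key v]
      calc ‖c‖ * ‖f v - f (T.par v)‖
          < ‖c‖ * (ε / ‖c‖) :=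
            mul_lt_mul_of_pos_left (hN v hv hd) hcpos
        _ = ε := by field_simp

theorem memLip0_sum (T : LipTree V) {ι : Type*} (s : Finset ι) (F : ι → V → ℂ)
    (hF : ∀ i ∈ s, T.MemLip0 (F i)) : T.MemLip0 (fun v => ∑ i ∈ s, F i v) := by
  induction s using Finset.induction_on with
  | empty => simpa using memLip0_const T 0
  | insert _ _ hnot ih =>
    rename_i a s
    simp only [Finset.sum_insert hnot]
    exact memLip0_add T (hF a (Finset.mem_insert_self a s))
      (ih (fun i hi => hF i (Finset.mem_insert_of_mem hi)))


noncomputable def chiSol (lam : ℂ) (φ : V → V) (w : V) (v : V) : ℂ :=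
  ∑' k : ℕ, if φ^[k + 1] w = v then lam ^ k else 0

theorem summable_ite (lam : ℂ) (hlam : ‖lam‖ < 1) (p : ℕ → Prop) :
    Summable (fun k : ℕ => if p k then lam ^ k else 0) := by
  apply Summable.of_norm_bounded (g := fun k : ℕ => ‖lam‖ ^ k)
  · exact summable_geometric_of_lt_one (norm_nonneg lam) hlam
  · intro k
    by_cases h : p k <;>
      simp [h, norm_pow, pow_nonneg (norm_nonneg lam) k]

theorem chiSol_eq (lam : ℂ) (hlam : ‖lam‖ < 1) (φ : V → V)
    (hinj : Function.Injective φ) (w v : V) :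
    chiSol lam φ w (φ v) = (if v = w then 1 else 0) + lam * chiSol lam φ w v := by
  have h1 : ∀ k : ℕ, (if φ^[k + 1] w = φ v then lam ^ k else 0)
      = (if φ^[k] w = v then lam ^ k else 0) := by
    intro k
    rw [Function.iterate_succ_apply']
    simp [hinj.eq_iff]
  unfold chiSol
  rw [tsum_congr h1, Summable.tsum_eq_zero_add (summable_ite lam hlam _)]
  congr 1
  · by_cases h : v = w
    · simp [h]
    · rw [Function.iterate_zero_apply, if_neg (fun hh : w = v => h hh.symm), if_neg h]
  · rw [← tsum_mul_left]
    apply tsum_congr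
    intro k
    by_cases h : φ^[k + 1] w = v <;> simp only [h, if_true, if_false, pow_succ', mul_zero]

theorem chiSol_tail (lam : ℂ) (hlam : ‖lam‖ < 1) (φ : V → V) (w v : V)
    (K : ℕ) (hv : ∀ k, k < K → φ^[k + 1] w ≠ v) :
    ‖chiSol lam φ w v‖ ≤ ‖lam‖ ^ K / (1 - ‖lam‖) := by
  set r := ‖lam‖ with hr
  have hr0 : 0 ≤ r := norm_nonneg lam
  have hsum := summable_ite lam hlam (fun k => φ^[k + 1] w = v)
  have hbound : ∀ i : ℕ, ‖if φ^[i + K + 1] w = v then lam ^ (i + K) else 0‖ ≤ r ^ K * r ^ i := by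
    intro i
    by_cases h : φ^[i + K + 1] w = v
    · exact le_of_eq (by rw [if_pos h, norm_pow, pow_add, mul_comm])
    · simp only [h, if_false, norm_zero]
      positivity
  have hsum2 : Summable (fun i : ℕ => r ^ K * r ^ i) :=
    (summable_geometric_of_lt_one hr0 hlam).mul_left _
  have hsumn : Summable (fun i : ℕ => ‖if φ^[i + K + 1] w = v then lam ^ (i + K) else 0‖) :=
    Summable.of_nonneg_of_le (fun i => norm_nonneg _) hbound hsum2
  unfold chiSol
  rw [← hsum.sum_add_tsum_nat_add K]
  have hz : (∑ i ∈ Finset.range K, if φ^[i + 1] w = v then lam ^ i else 0) = 0 :=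
    Finset.sum_eq_zero (fun i hi => if_neg (hv i (Finset.mem_range.mp hi)))
  rw [hz, zero_add]
  calc ‖∑' i : ℕ, if φ^[i + K + 1] w = v then lam ^ (i + K) else 0‖
      ≤ ∑' i : ℕ, ‖if φ^[i + K + 1] w = v then lam ^ (i + K) else 0‖ :=
        norm_tsum_le_tsum_norm hsumn
    _ ≤ ∑' i : ℕ, r ^ K * r ^ i := hsumn.tsum_le_tsum hbound hsum2
    _ = r ^ K * (1 - r)⁻¹ := by rw [tsum_mul_left, tsum_geometric_of_lt_one hr0 hlam]
    _ = r ^ K / (1 - r) := by rw [div_eq_mul_inv]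

theorem chiSol_norm_le (lam : ℂ) (hlam : ‖lam‖ < 1) (φ : V → V) (w v : V) :
    ‖chiSol lam φ w v‖ ≤ 1 / (1 - ‖lam‖) := by
  simpa using chiSol_tail lam hlam φ w v 0 (fun k hk => absurd hk (Nat.not_lt_zero k))


theorem chiSol_memLip0 (T : LipTree V) (lam : ℂ) (hlam : ‖lam‖ < 1)
    (φ : V → V) (w : V) : T.MemLip0 (chiSol lam φ w) := by
  have hr0 : 0 ≤ ‖lam‖ := norm_nonneg lam
  have hr1 : 0 < 1 - ‖lam‖ := by linarith
  constructor
  · refine ⟨2 * (1 / (1 - ‖lam‖)), fun v hv => ?_⟩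
    calc ‖chiSol lam φ w v - chiSol lam φ w (T.par v)‖
        ≤ ‖chiSol lam φ w v‖ + ‖chiSol lam φ w (T.par v)‖ :=
          habs _ _
      _ ≤ 1 / (1 - ‖lam‖) + 1 / (1 - ‖lam‖) :=
          add_le_add (chiSol_norm_le lam hlam φ w v) (chiSol_norm_le lam hlam φ w (T.par v))
      _ = 2 * (1 / (1 - ‖lam‖)) := by ring
  · intro ε hε
    -- pick K with (abs lam)^K / (1 - abs lam) < ε / 2
    have htend : Filter.Tendsto (fun K : ℕ => ‖lam‖ ^ K) Filter.atTop (nhds 0) :=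
      tendsto_pow_atTop_nhds_zero_of_lt_one hr0 hlam
    have hpos : (0 : ℝ) < ε / 2 * (1 - ‖lam‖) := by positivity
    obtain ⟨K, hK⟩ := (htend.eventually (gt_mem_nhds hpos)).exists
    have hKd : ‖lam‖ ^ K / (1 - ‖lam‖) < ε / 2 := by
      rw [div_lt_iff₀ hr1]; linarith
    set S : Finset V := (Finset.range K).image (fun k => φ^[k + 1] w) with hS
    have hBfin : ((S : Set V) ∪ {v | T.par v ∈ S}).Finite := by
      refine (S.finite_toSet).union ?_
      have : {v | T.par v ∈ S} = ⋃ u ∈ S, {v | T.par v = u} := by ext x; simp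
      rw [this]
      exact Set.Finite.biUnion S.finite_toSet (fun u _ => parPreimage_finite T u)
    refine ⟨hBfin.toFinset.sup T.depth + 1, fun v hv hN => ?_⟩
    have hvB : v ∉ hBfin.toFinset := by
      intro h
      have := Finset.le_sup (f := T.depth) h
      omega
    rw [Set.Finite.mem_toFinset] at hvB
    simp only [Set.mem_union, Finset.mem_coe, Set.mem_setOf_eq] at hvB
    push_neg at hvB
    obtain ⟨hv1, hv2⟩ := hvB
    have key : ∀ u : V, u ∉ S → ∀ k, k < K → φ^[k + 1] w ≠ u := by
      intro u hu k hk heq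
      exact hu (Finset.mem_image.mpr ⟨k, Finset.mem_range.mpr hk, heq⟩)
    have h1 := chiSol_tail lam hlam φ w v K (key v hv1)
    have h2 := chiSol_tail lam hlam φ w (T.par v) K (key (T.par v) hv2)
    calc ‖chiSol lam φ w v - chiSol lam φ w (T.par v)‖
        ≤ ‖chiSol lam φ w v‖ + ‖chiSol lam φ w (T.par v)‖ := habs _ _
      _ < ε := by linarith

end DenseAux

open DenseAux

open scoped Classical in
/-- If `φ` is injective and `|λ| < 1`, then `C_φ - λ` has dense range on `Lip₀`; more
precisely each indicator `χ_{w}` lies in the range of `C_φ - λ`. -/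
theorem dense_range_small_lambda {V : Type*} (T : LipTree V) (φ : V → V)
    (hinj : Function.Injective φ) (lam : ℂ) (hlam : ‖lam‖ < 1) :
    (∀ w : V, ∃ f : V → ℂ, T.MemLip0 f ∧
      (f ∘ φ - lam • f) = fun v : V => if v = w then (1 : ℂ) else 0) ∧
    (∀ g : V → ℂ, T.MemLip0 g → ∀ ε : ℝ, 0 < ε →
      ∃ f : V → ℂ, T.MemLip0 f ∧ T.normLip (f ∘ φ - lam • f - g) < ε) := by
  constructor
  · intro w
    refine ⟨chiSol lam φ w, chiSol_memLip0 T lam hlam φ w, ?_⟩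
    funext v
    simp only [Pi.sub_apply, Function.comp_apply, Pi.smul_apply, smul_eq_mul]
    rw [chiSol_eq lam hlam φ hinj w v]
    ring
  · intro g hg ε hε
    obtain ⟨N, hN⟩ := hg.2 (ε / 4) (by linarith)
    set c := g T.root with hc
    set q : V → ℂ := fun v => g (T.par^[T.depth v - N] v) with hq
    have hle : ∀ v : V, T.depth v ≤ N → q v = g v := by
      intro v hv
      simp only [hq]
      rw [Nat.sub_eq_zero_of_le hv, Function.iterate_zero_apply]
    have hdpar : ∀ v : V, v ≠ T.root → T.depth (T.par v) + 1 = T.depth v := depth_par T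
    have hstep : ∀ v : V, v ≠ T.root → N < T.depth v → q v = q (T.par v) := by
      intro v hv hNv
      have hd := hdpar v hv
      simp only [hq]
      have h1 : T.depth v - N = (T.depth (T.par v) - N) + 1 := by omega
      rw [h1, Function.iterate_succ_apply]
    have htr : ∀ v : V, T.depth (T.par^[T.depth v - N] v) ≤ N := by
      intro v
      have := depth_iterate_le T (T.depth v - N) v
      omega
    set B : Finset V := (ball_finite T N).toFinset with hB
    have hrootB : T.root ∈ B := by
      rw [hB, Set.Finite.mem_toFinset]
      simp [Set.mem_setOf_eq, depth_root T]
    have hBne : B.Nonempty := ⟨T.root, hrootB⟩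
    set K := B.sup' hBne (fun u => ‖g u - c‖) with hK
    have hK0 : 0 ≤ K :=
      le_trans (norm_nonneg (g T.root - c))
        (Finset.le_sup' (fun u => ‖g u - c‖) hrootB)
    have hKb : ∀ v : V, ‖q v - c‖ ≤ K := by
      intro v
      have hmem : T.par^[T.depth v - N] v ∈ B := by
        rw [hB, Set.Finite.mem_toFinset]; exact htr v
      exact Finset.le_sup' (fun u => ‖g u - c‖) hmem
    obtain ⟨n, hn⟩ := exists_nat_gt (K / (ε / 4))
    have hnR : (0 : ℝ) < n := by
      have h0 : (0 : ℝ) ≤ K / (ε / 4) := div_nonneg hK0 (by linarith)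
      linarith
    have hn0 : 0 < n := by exact_mod_cast hnR
    have hKn : K / n < ε / 4 := by
      rw [div_lt_iff₀ hnR]
      have := (div_lt_iff₀ (by linarith : (0 : ℝ) < ε / 4)).mp hn
      nlinarith
    set β : V → ℕ := fun v => n - (T.depth v - N) with hβ
    set s : V → ℂ := fun v => (((β v : ℝ) / n : ℝ) : ℂ) * (q v - c) with hs
    set B2 : Finset V := (ball_finite T (N + n)).toFinset with hB2
    have hs0 : ∀ v : V, v ∉ B2 → s v = 0 := by
      intro v hv
      have hd : ¬(T.depth v ≤ N + n) := by
        intro hle2; exact hv (by rw [hB2, Set.Finite.mem_toFinset]; exact hle2)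
      have hb0 : β v = 0 := by simp only [hβ]; omega
      simp [hs, hb0]
    set f : V → ℂ := fun v => c / (1 - lam) + ∑ u ∈ B2, s u * chiSol lam φ u v with hf
    have hlam1 : (1 : ℂ) - lam ≠ 0 := by
      intro h0
      have hl1 : lam = 1 := by linear_combination -h0
      rw [hl1] at hlam; simp at hlam
    have hchi : ∀ u v : V, chiSol lam φ u (φ v) - lam * chiSol lam φ u v
        = (if v = u then 1 else 0) := by
      intro u v; rw [chiSol_eq lam hlam φ hinj u v]; ring
    have heq : ∀ v : V, f (φ v) - lam * f v = c + s v := by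
      intro v
      have e1 : f (φ v) - lam * f v
          = (c / (1 - lam) - lam * (c / (1 - lam)))
            + ((∑ u ∈ B2, s u * chiSol lam φ u (φ v))
              - ∑ u ∈ B2, lam * (s u * chiSol lam φ u v)) := by
        simp only [hf, ← Finset.mul_sum]
        ring
      have e2 : c / (1 - lam) - lam * (c / (1 - lam)) = c := by
        field_simp
      have e3 : (∑ u ∈ B2, s u * chiSol lam φ u (φ v))
          - (∑ u ∈ B2, lam * (s u * chiSol lam φ u v)) = s v := by
        rw [← Finset.sum_sub_distrib]
        have hterm : ∀ u ∈ B2, s u * chiSol lam φ u (φ v) - lam * (s u * chiSol lam φ u v)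
            = if v = u then s u else 0 := by
          intro u _
          calc s u * chiSol lam φ u (φ v) - lam * (s u * chiSol lam φ u v)
              = s u * (chiSol lam φ u (φ v) - lam * chiSol lam φ u v) := by ring
            _ = s u * (if v = u then 1 else 0) := by rw [hchi u v]
            _ = if v = u then s u else 0 := by
                by_cases hvu : v = u <;> simp [hvu]
        rw [Finset.sum_congr rfl hterm, Finset.sum_ite_eq]
        by_cases hvB : v ∈ B2
        · simp [hvB]
        · simp [hvB, hs0 v hvB]
      rw [e1, e2, e3]
    have hfLip : T.MemLip0 f :=
      memLip0_add T (memLip0_const T (c / (1 - lam)))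
        (memLip0_sum T B2 (fun u v => s u * chiSol lam φ u v)
          (fun u _ => memLip0_smul T (s u) (chiSol_memLip0 T lam hlam φ u)))
    refine ⟨f, hfLip, ?_⟩
    have hEfun : (f ∘ φ - lam • f - g) = fun v => c + s v - g v := by
      funext v
      simp only [Pi.sub_apply, Function.comp_apply, Pi.smul_apply, smul_eq_mul]
      rw [heq v]
    rw [hEfun]
    set E : V → ℂ := fun v => c + s v - g v with hE
    have hqroot : q T.root = c := by
      rw [hle T.root (by rw [depth_root T]; omega), ← hc]
    have hEroot : E T.root = 0 := by
      simp only [hE, hs, hqroot, ← hc]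
      ring
    have hEdiff : ∀ v : V, v ≠ T.root → ‖E v - E (T.par v)‖ ≤ ε / 2 := by
      intro v hv
      have hd := hdpar v hv
      by_cases hcase : T.depth v ≤ N
      · have hβv : β v = n := by simp only [hβ]; omega
        have hβp : β (T.par v) = n := by simp only [hβ]; omega
        have hcoeff : ((n : ℝ) / (n : ℝ)) = 1 := div_self (ne_of_gt hnR)
        have hsv : s v = g v - c := by
          simp only [hs, hβv, hcoeff, hle v hcase]
          push_cast
          ring
        have hsp : s (T.par v) = g (T.par v) - c := by
          simp only [hs, hβp, hcoeff, hle (T.par v) (by omega)]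
          push_cast
          ring
        have hz : E v - E (T.par v) = 0 := by
          simp only [hE, hsv, hsp]; ring
        rw [hz]
        simp only [norm_zero]
        linarith
      · push_neg at hcase
        have hgd : ‖g v - g (T.par v)‖ < ε / 4 := hN v hv (by omega)
        have hqv : q v = q (T.par v) := hstep v hv hcase
        have hβle : β v ≤ β (T.par v) ∧ β (T.par v) ≤ β v + 1 := by
          constructor <;> (simp only [hβ]; omega)
        have hsd : s v - s (T.par v)
            = ((((β v : ℝ) - (β (T.par v) : ℝ)) / n : ℝ) : ℂ) * (q v - c) := by
          simp only [hs, ← hqv]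
          push_cast
          ring
        have hab1 : |((β v : ℝ) - (β (T.par v) : ℝ))| ≤ 1 := by
          have c1 : (β v : ℝ) ≤ (β (T.par v) : ℝ) := Nat.cast_le.mpr hβle.1
          have c2 : (β (T.par v) : ℝ) ≤ (β v : ℝ) + 1 := by exact_mod_cast hβle.2
          rw [abs_le]; constructor <;> linarith
        have habsd : ‖s v - s (T.par v)‖ ≤ K / n := by
          rw [hsd, norm_mul, Complex.norm_real, Real.norm_eq_abs]
          have h1 : |((β v : ℝ) - (β (T.par v) : ℝ)) / n| ≤ 1 / n := by
            rw [abs_div, abs_of_pos hnR]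
            gcongr
          calc |((β v : ℝ) - (β (T.par v) : ℝ)) / n| * ‖q v - c‖
              ≤ (1 / n) * K :=
                mul_le_mul h1 (hKb v) (norm_nonneg _) (by positivity)
            _ = K / n := by ring
        have hre : E v - E (T.par v) = (s v - s (T.par v)) - (g v - g (T.par v)) := by
          simp only [hE]; ring
        rw [hre]
        calc ‖(s v - s (T.par v)) - (g v - g (T.par v))‖
            ≤ ‖s v - s (T.par v)‖ + ‖g v - g (T.par v)‖ := habs _ _
          _ ≤ K / n + ε / 4 := add_le_add habsd (le_of_lt hgd)
          _ ≤ ε / 2 := by linarith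
    unfold LipTree.normLip
    apply max_lt
    · rw [hEroot]
      simpa using hε
    · refine lt_of_le_of_lt (Real.sSup_le ?_ (by linarith : (0 : ℝ) ≤ ε / 2))
        (by linarith : ε / 2 < ε)
      rintro r ⟨v, hv, rfl⟩
      exact hEdiff v hv
end
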